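/- Inscribed polygon setup: let n ≥ 3, o : E, ρ > 0, and let α : Fin n → ℝ be strictly increasing with α (n−1) − α 0 < 2π; define vertices v : ZMod n → E by v k = o + ρ • (Real.cos (α k̄), Real.sin (α k̄)), where k̄ ∈ {0, …, n−1} is the canonical representative of k. Suppose that every edge has a parallel edge of equal length with opposite orientation: for every i : ZMod n there exists j : ZMod n with j ≠ i such that v (j+1) − v j = −(v (i+1) − v i). Then the point reflection about o maps the vertex set onto itself: (Equiv.pointReflection o) '' Set.range v = Set.range v. -/

import Mathlib

noncomputable abbrev E : Type := EuclideanSpace ℝ (Fin 2)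

theorem lemK (a b a' b' c d c' d' : ℝ)
    (h1 : a^2 + b^2 = 1) (h2 : a'^2 + b'^2 = 1) (h3 : c^2 + d^2 = 1) (h4 : c'^2 + d'^2 = 1)
    (e1 : a + a' = c + c') (e2 : b + b' = d + d') :
    (c = -c' ∧ d = -d') ∨ (a = c ∧ b = d) ∨ (a = c' ∧ b = d' ∧ a' = c ∧ b' = d) := by
  by_cases hS : a + a' = 0 ∧ b + b' = 0
  · exact Or.inl ⟨by linarith [hS.1], by linarith [hS.2]⟩
  · have o1 : (a + a') * (a - a') + (b + b') * (b - b') = 0 := by linear_combination h1 - h2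
    have o2 : (a + a') * (c - c') + (b + b') * (d - d') = 0 := by
      linear_combination (c - c') * e1 + (d - d') * e2 + h3 - h4
    have cross : (a - a') * (d - d') - (b - b') * (c - c') = 0 := by
      rcases not_and_or.mp hS with h | h
      · have h5 : (a + a') * ((a - a') * (d - d') - (b - b') * (c - c')) = 0 := by
          linear_combination (d - d') * o1 - (b - b') * o2
        rcases mul_eq_zero.mp h5 with h' | h'
        · exact absurd h' h
        · exact h'
      · have h5 : (b + b') * ((a - a') * (d - d') - (b - b') * (c - c')) = 0 := by
          linear_combination (-(c - c')) * o1 + (a - a') * o2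
        rcases mul_eq_zero.mp h5 with h' | h'
        · exact absurd h' h
        · exact h'
    have hnorm : (a - a')^2 + (b - b')^2 = (c - c')^2 + (d - d')^2 := by
      linear_combination 2*h1 + 2*h2 - 2*h3 - 2*h4 - (a + a' + c + c') * e1 - (b + b' + d + d') * e2
    have lag : (((a-a') - (c-c'))^2 + ((b-b') - (d-d'))^2) * (((a-a') + (c-c'))^2 + ((b-b') + (d-d'))^2) = 0 := by
      linear_combination (4*((a-a')*(d-d') - (b-b')*(c-c'))) * cross +
        ((a-a')^2 + (b-b')^2 - (c-c')^2 - (d-d')^2) * hnorm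
    rcases mul_eq_zero.mp lag with h | h
    · right; left
      have q1 : ((a-a') - (c-c'))^2 = 0 := by
        have := sq_nonneg ((a-a') - (c-c')); have := sq_nonneg ((b-b') - (d-d')); linarith
      have q2 : ((b-b') - (d-d'))^2 = 0 := by
        have := sq_nonneg ((a-a') - (c-c')); have := sq_nonneg ((b-b') - (d-d')); linarith
      have hxx := sub_eq_zero.mp (sq_eq_zero_iff.mp q1)
      have hyy := sub_eq_zero.mp (sq_eq_zero_iff.mp q2)
      exact ⟨by linarith, by linarith⟩
    · right; right
      have q1 : ((a-a') + (c-c'))^2 = 0 := by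
        have := sq_nonneg ((a-a') + (c-c')); have := sq_nonneg ((b-b') + (d-d')); linarith
      have q2 : ((b-b') + (d-d'))^2 = 0 := by
        have := sq_nonneg ((a-a') + (c-c')); have := sq_nonneg ((b-b') + (d-d')); linarith
      have hxx : a - a' + (c - c') = 0 := sq_eq_zero_iff.mp q1
      have hyy : b - b' + (d - d') = 0 := sq_eq_zero_iff.mp q2
      exact ⟨by linarith, by linarith, by linarith, by linarith⟩

/-- A polygon inscribed in a circle, each of whose edges has a parallel edge of equal
length (with opposite orientation), is skew symmetric: its vertex set is mapped onto
itself by the point reflection about the center. -/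
theorem inscribed_polygon_parallel_edges_skew_symmetric
    (n : ℕ) (hn : 3 ≤ n) (o : E) (ρ : ℝ) (hρ : 0 < ρ)
    (α : Fin n → ℝ) (hα : StrictMono α)
    (hspan : α ⟨n - 1, by omega⟩ - α ⟨0, by omega⟩ < 2 * Real.pi)
    (v : ZMod n → E)
    (hv : ∀ k : Fin n, v ((k : ℕ) : ZMod n) =
      o + ρ • (WithLp.equiv 2 (Fin 2 → ℝ)).symm ![Real.cos (α k), Real.sin (α k)])
    (hpar : ∀ i : ZMod n, ∃ j : ZMod n, j ≠ i ∧ v (j + 1) - v j = -(v (i + 1) - v i)) :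
    (Equiv.pointReflection o) '' Set.range v = Set.range v := by
  haveI : NeZero n := ⟨by omega⟩
  haveI : Fact (1 < n) := ⟨by omega⟩
  set A : ZMod n → ℝ := fun i => α ⟨i.val, i.val_lt⟩ with hA
  have hv' : ∀ i : ZMod n, v i =
      o + ρ • (WithLp.equiv 2 (Fin 2 → ℝ)).symm ![Real.cos (A i), Real.sin (A i)] := by
    intro i
    have := hv ⟨i.val, i.val_lt⟩
    simpa [ZMod.natCast_rightInverse i, hA] using this
  have hc0 : ∀ i : ZMod n, v i 0 = o 0 + ρ * Real.cos (A i) := by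
    intro i
    have := congrArg (fun w : E => w 0) (hv' i)
    simpa using this
  have hc1 : ∀ i : ZMod n, v i 1 = o 1 + ρ * Real.sin (A i) := by
    intro i
    have := congrArg (fun w : E => w 1) (hv' i)
    simpa using this
  -- bound on angle differences
  have hlo : ∀ i : ZMod n, α ⟨0, by omega⟩ ≤ A i := by
    intro i
    exact hα.monotone (by simp [Fin.le_def])
  have hhi : ∀ i : ZMod n, A i ≤ α ⟨n - 1, by omega⟩ := by
    intro i
    refine hα.monotone ?_
    simp only [Fin.le_def]
    have := i.val_lt
    omega
  have hAbd : ∀ i j : ZMod n, |A i - A j| < 2 * Real.pi := by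
    intro i j
    rw [abs_sub_lt_iff]
    constructor <;> [skip; skip] <;> (have := hlo i; have := hhi i; have := hlo j; have := hhi j; linarith)
  -- injectivity of v
  have hρ' : ρ ≠ 0 := hρ.ne'
  have hinj : Function.Injective v := by
    intro i j hij
    have t0 : o 0 + ρ * Real.cos (A i) = o 0 + ρ * Real.cos (A j) := by
      rw [← hc0 i, ← hc0 j, hij]
    have t1 : o 1 + ρ * Real.sin (A i) = o 1 + ρ * Real.sin (A j) := by
      rw [← hc1 i, ← hc1 j, hij]
    have h0 : Real.cos (A i) = Real.cos (A j) := mul_left_cancel₀ hρ' (by linarith)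
    have h1 : Real.sin (A i) = Real.sin (A j) := mul_left_cancel₀ hρ' (by linarith)
    have hang : (A i : Real.Angle) = (A j : Real.Angle) := Real.Angle.cos_sin_inj h0 h1
    obtain ⟨k, hk⟩ := Real.Angle.angle_eq_iff_two_pi_dvd_sub.mp hang
    have hk0 : k = 0 := by
      by_contra hk0
      have h1le : (1 : ℝ) ≤ |(k : ℝ)| := by exact_mod_cast Int.one_le_abs hk0
      have habs : |A i - A j| = 2 * Real.pi * |(k : ℝ)| := by
        rw [hk, abs_mul, abs_of_pos (by positivity : (0:ℝ) < 2 * Real.pi)]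
      have h2 : 2 * Real.pi * 1 ≤ 2 * Real.pi * |(k : ℝ)| :=
        mul_le_mul_of_nonneg_left h1le (by positivity)
      have := hAbd i j
      rw [habs] at this
      linarith
    rw [hk0] at hk
    push_cast at hk
    have hAij : A i = A j := by linarith
    have hfin : (⟨i.val, i.val_lt⟩ : Fin n) = ⟨j.val, j.val_lt⟩ := hα.injective hAij
    have hval : i.val = j.val := by simpa using congrArg Fin.val hfin
    calc i = ((i.val : ℕ) : ZMod n) := (ZMod.natCast_rightInverse i).symm
      _ = ((j.val : ℕ) : ZMod n) := by rw [hval]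
      _ = j := ZMod.natCast_rightInverse j
  -- key step: each vertex has an antipodal partner
  have key : ∀ i : ZMod n, ∃ j : ZMod n, v j = (Equiv.pointReflection o) (v i) := by
    intro i
    obtain ⟨j, hji, hedge⟩ := hpar i
    have E0 : Real.cos (A (j+1)) + Real.cos (A (i+1)) = Real.cos (A j) + Real.cos (A i) := by
      have t := congrArg (fun w : E => w 0) hedge
      simp only [PiLp.sub_apply, PiLp.neg_apply] at t
      rw [hc0 (j+1), hc0 j, hc0 (i+1), hc0 i] at t
      exact mul_left_cancel₀ hρ' (by linear_combination t)
    have E1 : Real.sin (A (j+1)) + Real.sin (A (i+1)) = Real.sin (A j) + Real.sin (A i) := by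
      have t := congrArg (fun w : E => w 1) hedge
      simp only [PiLp.sub_apply, PiLp.neg_apply] at t
      rw [hc1 (j+1), hc1 j, hc1 (i+1), hc1 i] at t
      exact mul_left_cancel₀ hρ' (by linear_combination t)
    have unit : ∀ k : ZMod n, (Real.cos (A k))^2 + (Real.sin (A k))^2 = 1 := fun k =>
      Real.cos_sq_add_sin_sq _
    have hvv : ∀ k l : ZMod n, Real.cos (A k) = Real.cos (A l) → Real.sin (A k) = Real.sin (A l)
        → k = l := by
      intro k l h0 h1
      apply hinj
      rw [hv' k, hv' l, h0, h1]
    rcases lemK _ _ _ _ _ _ _ _ (unit (j+1)) (unit (i+1)) (unit j) (unit i) E0 E1 with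
      h | h | h
    · -- v j is the reflection of v i
      refine ⟨j, ?_⟩
      have hw : (WithLp.equiv 2 (Fin 2 → ℝ)).symm ![Real.cos (A j), Real.sin (A j)] =
          -(WithLp.equiv 2 (Fin 2 → ℝ)).symm ![Real.cos (A i), Real.sin (A i)] := by
        rw [h.1, h.2]
        ext t
        fin_cases t <;> simp
      rw [hv' i, hv' j, hw, Equiv.pointReflection_apply]
      simp only [vsub_eq_sub, vadd_eq_add, smul_neg]
      abel
    · -- impossible: v (j+1) = v j
      exfalso
      have hjj : j + 1 = j := hvv _ _ h.1 h.2
      have h10 : (1 : ZMod n) = 0 := by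
        have : j + 1 = j + 0 := by simpa using hjj
        exact add_left_cancel this
      exact one_ne_zero h10
    · -- impossible: v (j+1) = v i and v (i+1) = v j
      exfalso
      have hji1 : j + 1 = i := hvv _ _ h.1 h.2.1
      have hij1 : i + 1 = j := hvv _ _ h.2.2.1 h.2.2.2
      have h2 : j + 2 = j + 0 := by
        rw [add_zero]
        calc j + 2 = j + 1 + 1 := by ring
          _ = i + 1 := by rw [hji1]
          _ = j := hij1
      have h20 : (2 : ZMod n) = 0 := add_left_cancel h2
      have hcast : ((2 : ℕ) : ZMod n) = 0 := by push_cast; exact h20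
      have hdvd := (ZMod.natCast_eq_zero_iff 2 n).mp hcast
      have := Nat.le_of_dvd (by norm_num) hdvd
      omega
  -- conclude
  ext x
  simp only [Set.mem_image, Set.mem_range]
  constructor
  · rintro ⟨y, ⟨i, rfl⟩, rfl⟩
    obtain ⟨j, hj⟩ := key i
    exact ⟨j, hj⟩
  · rintro ⟨i, rfl⟩
    obtain ⟨j, hj⟩ := key i
    refine ⟨v j, ⟨j, rfl⟩, ?_⟩
    rw [hj]
    exact Equiv.pointReflection_involutive o (v i)
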